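/- Let A be a bounded linear operator on a complex Hilbert space with polar decomposition A = U|A|, and t ∈ [0,1]. Then w(A) ≤ (1/2)(w(|A|^t U |A|^{1−t}) + ‖A‖). -/

import Mathlib

noncomputable section
open ContinuousLinearMap

variable {H : Type*} [NormedAddCommGroup H] [InnerProductSpace ℂ H] [CompleteSpace H]

/-- The numerical radius of a bounded operator. -/
def nrad (A : H →L[ℂ] H) : ℝ :=
  sSup {r : ℝ | ∃ x : H, ‖x‖ = 1 ∧ r = ‖(inner ℂ (A x) x : ℂ)‖}

/-- The absolute value |A| = (A*A)^(1/2) via continuous functional calculus. -/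
def oabs (A : H →L[ℂ] H) : H →L[ℂ] H := cfc Real.sqrt (adjoint A * A)

/-- The 2×2 block operator matrix [[A,B],[C,D]] on the Hilbert space H ⊕ H. -/
def blk (A B C D : H →L[ℂ] H) : WithLp 2 (H × H) →L[ℂ] WithLp 2 (H × H) :=
  ((WithLp.prodContinuousLinearEquiv 2 ℂ H H).symm.toContinuousLinearMap).comp
    ((((A.comp (fst ℂ H H)) + B.comp (snd ℂ H H)).prod
      ((C.comp (fst ℂ H H)) + D.comp (snd ℂ H H))).comp
      (WithLp.prodContinuousLinearEquiv 2 ℂ H H).toContinuousLinearMap)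

lemma nrad_nonneg (A : H →L[ℂ] H) : 0 ≤ nrad A :=
  Real.sSup_nonneg (by rintro r ⟨x, hx, rfl⟩; positivity)

lemma nrad_bddAbove (A : H →L[ℂ] H) :
    BddAbove {r : ℝ | ∃ x : H, ‖x‖ = 1 ∧ r = ‖(inner ℂ (A x) x : ℂ)‖} := by
  refine ⟨‖A‖, ?_⟩
  rintro r ⟨y, hy, rfl⟩
  calc ‖(inner ℂ (A y) y : ℂ)‖ ≤ ‖A y‖ * ‖y‖ := norm_inner_le_norm _ _
    _ ≤ (‖A‖ * ‖y‖) * ‖y‖ := by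
        gcongr
        exact A.le_opNorm y
    _ = ‖A‖ := by rw [hy]; ring

lemma le_nrad (A : H →L[ℂ] H) {x : H} (hx : ‖x‖ = 1) :
    ‖(inner ℂ (A x) x : ℂ)‖ ≤ nrad A :=
  le_csSup (nrad_bddAbove A) ⟨x, hx, rfl⟩

lemma nrad_quad (A : H →L[ℂ] H) (v : H) :
    ‖(inner ℂ (A v) v : ℂ)‖ ≤ nrad A * ‖v‖ ^ 2 := by
  rcases eq_or_ne v 0 with rfl | hv
  · simp
  · have hv' : (0:ℝ) < ‖v‖ := norm_pos_iff.mpr hv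
    set r : ℂ := ((‖v‖⁻¹ : ℝ) : ℂ) with hr
    have hu : ‖r • v‖ = 1 := by
      rw [norm_smul, hr, Complex.norm_real, Real.norm_eq_abs, abs_of_nonneg (by positivity)]
      field_simp
    have h1 := le_nrad A hu
    have h2 : (inner ℂ (A (r • v)) (r • v) : ℂ) = r * r * inner ℂ (A v) v := by
      rw [map_smul, inner_smul_left, inner_smul_right, hr, Complex.conj_ofReal]
      ring
    rw [h2] at h1
    have h3 : ‖r * r * (inner ℂ (A v) v : ℂ)‖ = ‖v‖⁻¹ * ‖v‖⁻¹ * ‖(inner ℂ (A v) v : ℂ)‖ := by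
      rw [norm_mul, norm_mul, hr, Complex.norm_real, Real.norm_eq_abs,
        abs_of_nonneg (inv_nonneg.mpr hv'.le)]
    rw [h3] at h1
    have := mul_le_mul_of_nonneg_left h1 (le_of_lt (mul_pos hv' hv'))
    calc ‖(inner ℂ (A v) v : ℂ)‖
        = (‖v‖ * ‖v‖) * (‖v‖⁻¹ * ‖v‖⁻¹ * ‖(inner ℂ (A v) v : ℂ)‖) := by
          field_simp
      _ ≤ (‖v‖ * ‖v‖) * nrad A := this
      _ = nrad A * ‖v‖ ^ 2 := by ring

/-- For a self-adjoint operator, a bound on the quadratic form gives a bound on the norm. -/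
lemma norm_le_of_selfadjoint (Z : H →L[ℂ] H) (hZ : ContinuousLinearMap.adjoint Z = Z)
    {M : ℝ} (hM0 : 0 ≤ M) (h : ∀ v : H, ‖(inner ℂ (Z v) v : ℂ)‖ ≤ M * ‖v‖ ^ 2) : ‖Z‖ ≤ M := by
  refine Z.opNorm_le_bound hM0 fun v => ?_
  rcases eq_or_ne (Z v) 0 with h0 | h0
  · simp [h0]; positivity
  have hv : v ≠ 0 := by rintro rfl; simp at h0
  have hv' : (0:ℝ) < ‖v‖ := norm_pos_iff.mpr hv
  have hZv : (0:ℝ) < ‖Z v‖ := norm_pos_iff.mpr h0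
  set y : H := ((‖v‖ / ‖Z v‖ : ℝ) : ℂ) • Z v with hy
  have hyn : ‖y‖ = ‖v‖ := by
    rw [hy, norm_smul, Complex.norm_real, Real.norm_eq_abs, abs_of_nonneg (by positivity)]
    field_simp
  have hZvy : (inner ℂ (Z v) y : ℂ) = ((‖v‖ * ‖Z v‖ : ℝ) : ℂ) := by
    have hne : ((‖Z v‖ : ℝ) : ℂ) ≠ 0 := by exact_mod_cast hZv.ne'
    rw [hy, inner_smul_right, inner_self_eq_norm_sq_to_K]
    push_cast
    field_simp
    rfl
  have hZyv : (inner ℂ (Z y) v : ℂ) = ((‖v‖ * ‖Z v‖ : ℝ) : ℂ) := by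
    have : (inner ℂ (Z y) v : ℂ) = inner ℂ y (Z v) := by
      conv_lhs => rw [← hZ]
      exact ContinuousLinearMap.adjoint_inner_left Z v y
    rw [this, ← inner_conj_symm, hZvy, Complex.conj_ofReal]
  have hid : (inner ℂ (Z (v + y)) (v + y) : ℂ) - inner ℂ (Z (v - y)) (v - y)
      = 2 * inner ℂ (Z v) y + 2 * inner ℂ (Z y) v := by
    simp only [map_add, map_sub, inner_add_left, inner_add_right, inner_sub_left,
      inner_sub_right]
    ring
  have h4 : (4:ℝ) * (‖v‖ * ‖Z v‖)
      ≤ M * ‖v + y‖ ^ 2 + M * ‖v - y‖ ^ 2 := by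
    have hre : ((4:ℝ) * (‖v‖ * ‖Z v‖) : ℝ)
        = Complex.re ((inner ℂ (Z (v + y)) (v + y) : ℂ) - inner ℂ (Z (v - y)) (v - y)) := by
      rw [hid, hZvy, hZyv]
      push_cast
      simp
      ring
    rw [hre]
    have b1 : Complex.re (inner ℂ (Z (v + y)) (v + y) : ℂ) ≤ M * ‖v + y‖ ^ 2 :=
      le_trans (Complex.re_le_norm _) (le_trans (h _) le_rfl)
    have b2 : -Complex.re (inner ℂ (Z (v - y)) (v - y) : ℂ) ≤ M * ‖v - y‖ ^ 2 := by
      have := Complex.abs_re_le_norm (inner ℂ (Z (v - y)) (v - y) : ℂ)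
      have h2 := h (v - y)
      have : |Complex.re (inner ℂ (Z (v - y)) (v - y) : ℂ)| ≤ M * ‖v - y‖ ^ 2 :=
        le_trans (Complex.abs_re_le_norm _) h2
      linarith [neg_abs_le (Complex.re (inner ℂ (Z (v - y)) (v - y) : ℂ))]
    have := Complex.sub_re (inner ℂ (Z (v + y)) (v + y) : ℂ) (inner ℂ (Z (v - y)) (v - y) : ℂ)
    rw [this]
    linarith
  have hpar : ‖v + y‖ ^ 2 + ‖v - y‖ ^ 2 = 2 * (‖v‖ ^ 2 + ‖v‖ ^ 2) := by
    have := parallelogram_law_with_norm ℂ v y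
    rw [hyn] at this
    nlinarith [this]
  have : (4:ℝ) * (‖v‖ * ‖Z v‖) ≤ M * (4 * ‖v‖ ^ 2) := by
    calc (4:ℝ) * (‖v‖ * ‖Z v‖) ≤ M * ‖v + y‖ ^ 2 + M * ‖v - y‖ ^ 2 := h4
      _ = M * (‖v + y‖ ^ 2 + ‖v - y‖ ^ 2) := by ring
      _ = M * (4 * ‖v‖ ^ 2) := by rw [hpar]; ring
  have h5 : ‖v‖ * ‖Z v‖ ≤ ‖v‖ * (M * ‖v‖) := by nlinarith [this]
  exact le_of_mul_le_mul_left h5 hv'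

set_option maxHeartbeats 2000000 in
theorem stmt_14 (A U : H →L[ℂ] H)
    (hU : A = U * oabs A)
    (hker : LinearMap.ker (U : H →ₗ[ℂ] H) = (LinearMap.range (oabs A : H →ₗ[ℂ] H))ᗮ)
    (hiso : ∀ x ∈ (LinearMap.ker (U : H →ₗ[ℂ] H))ᗮ, ‖U x‖ = ‖x‖)
    (t : ℝ) (ht : t ∈ Set.Icc (0 : ℝ) 1) :
    nrad A ≤ (1 / 2) * (nrad (cfc (fun x : ℝ => x ^ t) (oabs A) * U
      * cfc (fun x : ℝ => x ^ (1 - t)) (oabs A)) + ‖A‖) := by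
  obtain ⟨ht0, ht1⟩ := ht
  have h1t : (0:ℝ) ≤ 1 - t := by linarith
  rcases subsingleton_or_nontrivial H with hsub | hnt
  · refine Real.sSup_le ?_ ?_
    · rintro r ⟨x, hx, rfl⟩
      exfalso
      rw [Subsingleton.elim x 0] at hx
      simp at hx
    · have h1 := nrad_nonneg (cfc (fun x : ℝ => x ^ t) (oabs A) * U
        * cfc (fun x : ℝ => x ^ (1 - t)) (oabs A))
      have h2 := norm_nonneg A
      linarith
  set P : H →L[ℂ] H := oabs A with hPdef
  set Pt : H →L[ℂ] H := cfc (fun x : ℝ => x ^ t) P with hPtdef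
  set Ps : H →L[ℂ] H := cfc (fun x : ℝ => x ^ (1 - t)) P with hPsdef
  set T : H →L[ℂ] H := Pt * U * Ps with hTdef
  -- basic facts about P
  have hAA : (0 : H →L[ℂ] H) ≤ adjoint A * A := by
    rw [← star_eq_adjoint]; exact star_mul_self_nonneg A
  have hPsa : IsSelfAdjoint P := cfc_predicate _ _
  have hP0 : (0 : H →L[ℂ] H) ≤ P := by
    rw [hPdef, oabs]
    exact cfc_nonneg (fun x _ => Real.sqrt_nonneg x)
  have hPP : P * P = adjoint A * A := by
    rw [hPdef, oabs]
    calc cfc Real.sqrt (adjoint A * A) * cfc Real.sqrt (adjoint A * A)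
        = cfc (fun x : ℝ => Real.sqrt x * Real.sqrt x) (adjoint A * A) := by
          rw [cfc_mul _ _ _ Real.continuous_sqrt.continuousOn Real.continuous_sqrt.continuousOn]
      _ = cfc (_root_.id : ℝ → ℝ) (adjoint A * A) := by
          refine cfc_congr fun x hx => ?_
          exact Real.mul_self_sqrt (spectrum_nonneg_of_nonneg hAA hx)
      _ = adjoint A * A := cfc_id ℝ _ (by rw [← star_eq_adjoint]; exact IsSelfAdjoint.star_mul_self A)
  have hnormP : ‖P‖ = ‖A‖ := by
    have h1 : ‖P‖ * ‖P‖ = ‖A‖ * ‖A‖ := by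
      calc ‖P‖ * ‖P‖ = ‖star P * P‖ := (CStarRing.norm_star_mul_self).symm
        _ = ‖adjoint A * A‖ := by rw [hPsa.star_eq, hPP]
        _ = ‖star A * A‖ := by rw [star_eq_adjoint]
        _ = ‖A‖ * ‖A‖ := CStarRing.norm_star_mul_self
    nlinarith [norm_nonneg P, norm_nonneg A]
  have hspec : ∀ x ∈ spectrum ℝ P, 0 ≤ x ∧ x ≤ ‖A‖ := by
    intro x hx
    refine ⟨spectrum_nonneg_of_nonneg hP0 hx, ?_⟩
    have := spectrum.norm_le_norm_of_mem hx
    rw [Real.norm_eq_abs, hnormP] at this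
    exact le_trans (le_abs_self x) this
  have hcont : ∀ u : ℝ, 0 ≤ u → ContinuousOn (fun x : ℝ => x ^ u) (spectrum ℝ P) :=
    fun u hu => continuousOn_id.rpow_const (fun x _ => Or.inr hu)
  have hPsPt : Ps * Pt = P := by
    rw [hPsdef, hPtdef]
    calc cfc (fun x : ℝ => x ^ (1 - t)) P * cfc (fun x : ℝ => x ^ t) P
        = cfc (fun x : ℝ => x ^ (1 - t) * x ^ t) P := by
          rw [cfc_mul _ _ _ (hcont _ h1t) (hcont _ ht0)]
      _ = cfc (_root_.id : ℝ → ℝ) P := by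
          refine cfc_congr fun x hx => ?_
          obtain ⟨hx0, -⟩ := hspec x hx
          show x ^ (1 - t) * x ^ t = _root_.id x
          rcases eq_or_lt_of_le hx0 with h | h
          · rcases eq_or_lt_of_le ht0 with h' | h'
            · rw [← h, ← h']
              norm_num
            · rw [← h, Real.zero_rpow (ne_of_gt h'), mul_zero]
              rfl
          · rw [← Real.rpow_add h]
            norm_num
      _ = P := cfc_id ℝ P hPsa
  have hstarPt : star Pt = Pt := (cfc_predicate (fun x : ℝ => x ^ t) P : IsSelfAdjoint _).star_eq
  have hstarPs : star Ps = Ps :=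
    (cfc_predicate (fun x : ℝ => x ^ (1 - t)) P : IsSelfAdjoint _).star_eq
  have hPt_norm : ‖Pt‖ ≤ ‖A‖ ^ t := by
    rw [hPtdef]
    refine norm_cfc_le (Real.rpow_nonneg (norm_nonneg A) t) fun x hx => ?_
    obtain ⟨hx0, hx1⟩ := hspec x hx
    rw [Real.norm_eq_abs, abs_of_nonneg (Real.rpow_nonneg hx0 t)]
    exact Real.rpow_le_rpow hx0 hx1 ht0
  have hPs_norm : ‖Ps‖ ≤ ‖A‖ ^ (1 - t) := by
    rw [hPsdef]
    refine norm_cfc_le (Real.rpow_nonneg (norm_nonneg A) (1 - t)) fun x hx => ?_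
    obtain ⟨hx0, hx1⟩ := hspec x hx
    rw [Real.norm_eq_abs, abs_of_nonneg (Real.rpow_nonneg hx0 (1 - t))]
    exact Real.rpow_le_rpow hx0 hx1 h1t
  -- U is a contraction
  have hUle : ∀ v : H, ‖U v‖ ≤ ‖v‖ := by
    intro v
    haveI : CompleteSpace (LinearMap.ker (U : H →ₗ[ℂ] H)) :=
      (ContinuousLinearMap.isClosed_ker U).completeSpace_coe
    obtain ⟨a, ha, b, hb, rfl⟩ := (LinearMap.ker (U : H →ₗ[ℂ] H)).exists_add_mem_mem_orthogonal v
    have hUa : U a = 0 := ha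
    have hU2 : U (a + b) = U b := by rw [map_add, hUa, zero_add]
    rw [hU2, hiso b hb]
    have horth : (inner ℂ a b : ℂ) = 0 :=
      Submodule.inner_right_of_mem_orthogonal ha hb
    have hsq := norm_add_sq_eq_norm_sq_add_norm_sq_of_inner_eq_zero a b horth
    nlinarith [norm_nonneg a, norm_nonneg b, norm_nonneg (a + b), hsq]
  have hUnorm : ‖U‖ ≤ 1 := U.opNorm_le_bound zero_le_one (fun v => by simpa using hUle v)
  -- reduce to a bound for each unit vector
  refine Real.sSup_le ?_ ?_
  swap
  · have h1 := nrad_nonneg T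
    have h2 := norm_nonneg A
    rw [hTdef] at h1
    linarith
  rintro r ⟨x, hx, rfl⟩
  rcases eq_or_lt_of_le (norm_nonneg A) with hA | hA0
  · have hA' : A = 0 := by rwa [eq_comm, norm_eq_zero] at hA
    have : (inner ℂ (A x) x : ℂ) = 0 := by simp [hA']
    rw [this]
    simp only [norm_zero]
    have := nrad_nonneg T
    rw [hTdef] at this
    positivity
  -- main case
  set z : ℂ := inner ℂ (A x) x with hz
  set c : ℂ := if z = 0 then 1 else (‖z‖ : ℂ)⁻¹ * z with hc
  have hcz : (starRingEnd ℂ) c * z = (‖z‖ : ℂ) := by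
    rw [hc]
    split_ifs with h
    · simp [h]
    · have hz0 : (‖z‖ : ℝ) ≠ 0 := norm_ne_zero_iff.mpr h
      have hne : ((‖z‖ : ℝ) : ℂ) ≠ 0 := Complex.ofReal_ne_zero.mpr hz0
      have hzz : z * (starRingEnd ℂ) z = ((‖z‖ * ‖z‖ : ℝ) : ℂ) := by
        rw [Complex.mul_conj]
        norm_cast
        rw [Complex.normSq_eq_norm_sq]
        ring
      rw [map_mul, map_inv₀, Complex.conj_ofReal, mul_assoc,
        mul_comm ((starRingEnd ℂ) z) z, hzz]
      push_cast
      rw [← mul_assoc, inv_mul_cancel₀ hne, one_mul]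
  have hcz' : c * (starRingEnd ℂ) z = (‖z‖ : ℂ) := by
    have h := congrArg (starRingEnd ℂ) hcz
    rw [map_mul, Complex.conj_conj, Complex.conj_ofReal] at h
    exact h
  have hcnorm : ‖c‖ = 1 := by
    rw [hc]
    split_ifs with h
    · exact norm_one
    · have hz0 : ‖z‖ ≠ 0 := norm_ne_zero_iff.mpr h
      rw [norm_mul, norm_inv, Complex.norm_real, Real.norm_eq_abs, abs_of_nonneg (norm_nonneg z)]
      exact inv_mul_cancel₀ hz0
  set s : ℝ := ‖A‖ ^ (t - 1/2) with hs
  have hspos : 0 < s := Real.rpow_pos_of_pos hA0 _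
  have hsinv : s⁻¹ = ‖A‖ ^ ((1:ℝ)/2 - t) := by
    rw [hs, ← Real.rpow_neg hA0.le]
    norm_num
  set A₀ : H →L[ℂ] H := (c * (s : ℂ)) • (U * Ps) with hA₀
  set B₀ : H →L[ℂ] H := ((s⁻¹ : ℝ) : ℂ) • Pt with hB₀
  set F : H →L[ℂ] H := A₀ + B₀ with hF
  set G : H →L[ℂ] H := A₀ - B₀ with hG
  set W : H →L[ℂ] H := c • T with hW
  have hstarB₀ : star B₀ = B₀ := by
    rw [hB₀, star_smul, hstarPt, Complex.star_def, Complex.conj_ofReal]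
  have hA₀B₀ : A₀ * B₀ = c • A := by
    rw [hA₀, hB₀, smul_mul_assoc, mul_smul_comm, smul_smul]
    have h1 : c * (s : ℂ) * ((s⁻¹ : ℝ) : ℂ) = c := by
      push_cast
      rw [mul_assoc, mul_inv_cancel₀ (by exact_mod_cast hspos.ne' : (s:ℂ) ≠ 0), mul_one]
    rw [h1, mul_assoc, hPsPt, ← hU]
  have hBA : B₀ * A₀ = W := by
    rw [hA₀, hB₀, hW, hTdef, smul_mul_assoc, mul_smul_comm, smul_smul]
    have h1 : ((s⁻¹ : ℝ) : ℂ) * (c * (s : ℂ)) = c := by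
      push_cast
      rw [mul_comm, mul_assoc, mul_inv_cancel₀ (by exact_mod_cast hspos.ne' : (s:ℂ) ≠ 0), mul_one]
    rw [h1, ← mul_assoc]
  have hstarAB : star A₀ * B₀ = star W := by
    rw [← hBA, star_mul, hstarB₀]
  have hBstarA : B₀ * star A₀ = star (c • A) := by
    rw [← hA₀B₀, star_mul, hstarB₀]
  have hFsF : star F * F = star A₀ * A₀ + B₀ * B₀ + (star W + W) := by
    rw [hF, star_add, hstarB₀, add_mul, mul_add, mul_add, hBA, hstarAB]
    abel
  have hkey : F * star F = G * star G + ((c • A + star (c • A)) + (c • A + star (c • A))) := by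
    rw [hF, hG, star_add, star_sub, hstarB₀]
    rw [add_mul, mul_add, mul_add, sub_mul, mul_sub, mul_sub, hA₀B₀, hBstarA]
    abel
  -- quadratic form computations
  have hYx : (inner ℂ x (((c • A + star (c • A)) + (c • A + star (c • A))) x) : ℂ)
      = 4 * (‖z‖ : ℂ) := by
    have h1 : (inner ℂ x ((c • A) x) : ℂ) = (‖z‖ : ℂ) := by
      rw [ContinuousLinearMap.smul_apply, inner_smul_right, ← inner_conj_symm, ← hz, hcz']
    have h2 : (inner ℂ x ((star (c • A)) x) : ℂ) = (‖z‖ : ℂ) := by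
      rw [star_eq_adjoint, ContinuousLinearMap.adjoint_inner_right,
        ContinuousLinearMap.smul_apply, inner_smul_left, ← hz, hcz]
    simp only [ContinuousLinearMap.add_apply, inner_add_right, h1, h2]
    ring
  have hFx : (inner ℂ x ((F * star F) x) : ℂ) = ((‖star F x‖ : ℝ) : ℂ) ^ 2 := by
    rw [ContinuousLinearMap.mul_apply]
    rw [show (inner ℂ x (F ((star F) x)) : ℂ) = inner ℂ ((ContinuousLinearMap.adjoint F) x) ((star F) x)
      from (ContinuousLinearMap.adjoint_inner_left F ((star F) x) x).symm]
    rw [← star_eq_adjoint, inner_self_eq_norm_sq_to_K]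
    norm_cast
  have hGx : (inner ℂ x ((G * star G) x) : ℂ) = ((‖star G x‖ : ℝ) : ℂ) ^ 2 := by
    rw [ContinuousLinearMap.mul_apply]
    rw [show (inner ℂ x (G ((star G) x)) : ℂ) = inner ℂ ((ContinuousLinearMap.adjoint G) x) ((star G) x)
      from (ContinuousLinearMap.adjoint_inner_left G ((star G) x) x).symm]
    rw [← star_eq_adjoint, inner_self_eq_norm_sq_to_K]
    norm_cast
  have hchain : (4:ℝ) * ‖z‖ = ‖star F x‖ ^ 2 - ‖star G x‖ ^ 2 := by
    have h1 : (inner ℂ x ((F * star F) x) : ℂ)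
        = inner ℂ x ((G * star G) x) + 4 * (‖z‖ : ℂ) := by
      rw [hkey]
      simp only [ContinuousLinearMap.add_apply, inner_add_right]
      rw [← hYx]
      simp only [ContinuousLinearMap.add_apply, inner_add_right]
    rw [hFx, hGx] at h1
    norm_cast at h1
    linarith
  have hFxle : ‖star F x‖ ^ 2 ≤ ‖F‖ ^ 2 := by
    have h1 : ‖star F x‖ ≤ ‖star F‖ * ‖x‖ := (star F).le_opNorm x
    rw [hx, mul_one, norm_star] at h1
    exact pow_le_pow_left₀ (norm_nonneg _) h1 2
  have hnormFsq : ‖F‖ ^ 2 = ‖star F * F‖ := by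
    rw [CStarRing.norm_star_mul_self]; ring
  -- norm bounds on the three pieces
  have hA₀norm : ‖A₀‖ ≤ ‖A‖ ^ ((1:ℝ)/2) := by
    rw [hA₀]
    calc ‖(c * (s : ℂ)) • (U * Ps)‖ = ‖c * (s : ℂ)‖ * ‖U * Ps‖ := norm_smul _ _
      _ ≤ (1 * s) * (1 * ‖A‖ ^ (1 - t)) := by
          refine mul_le_mul ?_ ?_ (norm_nonneg _) (by positivity)
          · rw [norm_mul, hcnorm, one_mul, Complex.norm_real, Real.norm_eq_abs,
              abs_of_nonneg hspos.le, one_mul]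
          · calc ‖U * Ps‖ ≤ ‖U‖ * ‖Ps‖ := norm_mul_le _ _
              _ ≤ 1 * ‖A‖ ^ (1 - t) := mul_le_mul hUnorm hPs_norm (norm_nonneg _) zero_le_one
      _ = s * ‖A‖ ^ (1 - t) := by ring
      _ = ‖A‖ ^ ((1:ℝ)/2) := by
          rw [hs, ← Real.rpow_add hA0]
          norm_num
  have hB₀norm : ‖B₀‖ ≤ ‖A‖ ^ ((1:ℝ)/2) := by
    rw [hB₀]
    calc ‖((s⁻¹ : ℝ) : ℂ) • Pt‖ = ‖((s⁻¹ : ℝ) : ℂ)‖ * ‖Pt‖ := norm_smul _ _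
      _ ≤ s⁻¹ * ‖A‖ ^ t := by
          refine mul_le_mul ?_ hPt_norm (norm_nonneg _) (by positivity)
          rw [Complex.norm_real, Real.norm_eq_abs, abs_of_nonneg (by positivity)]
      _ = ‖A‖ ^ ((1:ℝ)/2) := by
          rw [hsinv, ← Real.rpow_add hA0]
          norm_num
  have hhalf : ‖A‖ ^ ((1:ℝ)/2) * ‖A‖ ^ ((1:ℝ)/2) = ‖A‖ := by
    rw [← Real.rpow_add hA0]
    norm_num
  have hp1 : ‖star A₀ * A₀‖ ≤ ‖A‖ := by
    rw [CStarRing.norm_star_mul_self]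
    calc ‖A₀‖ * ‖A₀‖ ≤ ‖A‖ ^ ((1:ℝ)/2) * ‖A‖ ^ ((1:ℝ)/2) :=
          mul_le_mul hA₀norm hA₀norm (norm_nonneg _) (by positivity)
      _ = ‖A‖ := hhalf
  have hp2 : ‖B₀ * B₀‖ ≤ ‖A‖ := by
    calc ‖B₀ * B₀‖ ≤ ‖B₀‖ * ‖B₀‖ := norm_mul_le _ _
      _ ≤ ‖A‖ ^ ((1:ℝ)/2) * ‖A‖ ^ ((1:ℝ)/2) :=
          mul_le_mul hB₀norm hB₀norm (norm_nonneg _) (by positivity)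
      _ = ‖A‖ := hhalf
  have hnradT : 0 ≤ nrad T := nrad_nonneg T
  have hp3 : ‖star W + W‖ ≤ 2 * nrad T := by
    refine norm_le_of_selfadjoint _ ?_ (by positivity) ?_
    · rw [← star_eq_adjoint, star_add, star_star, add_comm]
    · intro v
      have h1 : (inner ℂ ((star W + W) v) v : ℂ)
          = (starRingEnd ℂ) (inner ℂ (W v) v) + inner ℂ (W v) v := by
        rw [ContinuousLinearMap.add_apply, inner_add_left]
        congr 1
        rw [star_eq_adjoint, ContinuousLinearMap.adjoint_inner_left, ← inner_conj_symm]
      rw [h1]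
      calc ‖(starRingEnd ℂ) (inner ℂ (W v) v : ℂ) + inner ℂ (W v) v‖
          ≤ ‖(starRingEnd ℂ) (inner ℂ (W v) v : ℂ)‖ + ‖(inner ℂ (W v) v : ℂ)‖ := norm_add_le _ _
        _ = 2 * ‖(inner ℂ (W v) v : ℂ)‖ := by rw [RCLike.norm_conj]; ring
        _ ≤ 2 * (nrad T * ‖v‖ ^ 2) := by
            have : ‖(inner ℂ (W v) v : ℂ)‖ = ‖c‖ * ‖(inner ℂ (T v) v : ℂ)‖ := by
              rw [hW, ContinuousLinearMap.smul_apply, inner_smul_left, norm_mul, RCLike.norm_conj]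
            rw [this, hcnorm, one_mul]
            have := nrad_quad T v
            linarith
        _ = 2 * nrad T * ‖v‖ ^ 2 := by ring
  -- put everything together
  have htot : (4:ℝ) * ‖z‖ ≤ 2 * ‖A‖ + 2 * nrad T := by
    have h1 : (4:ℝ) * ‖z‖ ≤ ‖F‖ ^ 2 := by
      rw [hchain]
      have := sq_nonneg ‖star G x‖
      nlinarith [hFxle]
    have h2 : ‖star F * F‖ ≤ ‖A‖ + ‖A‖ + 2 * nrad T := by
      rw [hFsF]
      calc ‖star A₀ * A₀ + B₀ * B₀ + (star W + W)‖
          ≤ ‖star A₀ * A₀ + B₀ * B₀‖ + ‖star W + W‖ := norm_add_le _ _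
        _ ≤ (‖star A₀ * A₀‖ + ‖B₀ * B₀‖) + ‖star W + W‖ := by
            gcongr
            exact norm_add_le _ _
        _ ≤ (‖A‖ + ‖A‖) + 2 * nrad T := by gcongr
        _ = ‖A‖ + ‖A‖ + 2 * nrad T := rfl
    rw [hnormFsq] at h1
    linarith
  have : ‖z‖ ≤ 1 / 2 * (nrad T + ‖A‖) := by linarith
  simpa [hz, hTdef] using this
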